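/- Two extra disjoint paths from a disjoint double connection (content of Lemma 4.23). Let ω be a percolation configuration on ℤ^d, let E be a finite nonempty set of ω-occupied edges, let u, v ∈ V(E), and let b ∈ ℤ^d. If ω ∈ {v ↔ b} ∘ {b ↔ u}, then there exist two ω-occupied paths π₁ and π₂, each starting at b and ending at a vertex of V(E), such that π₁ and π₂ are edge-disjoint from each other and neither π₁ nor π₂ uses any edge of E (the paths may be trivial if b ∈ V(E)). -/

import Mathlib

/-- The vertex set of the hypercubic lattice `ℤ^d`. -/
abbrev Vtx (d : ℕ) := Fin d → ℤ

/-- A bond percolation configuration: each (unordered) pair of vertices is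
occupied (`true`) or vacant (`false`). -/
abbrev BondConfig (d : ℕ) := Sym2 (Vtx d) → Bool

/-- The Euclidean norm of a point of `ℤ^d`. -/
noncomputable def znorm {d : ℕ} (x : Vtx d) : ℝ :=
  Real.sqrt (∑ i, ((x i : ℝ)) ^ 2)

/-- The edge between `a` and `b` is occupied (an edge requires `a ≠ b`). -/
def occEdge {d : ℕ} (ω : BondConfig d) (a b : Vtx d) : Prop :=
  a ≠ b ∧ ω s(a, b) = true

/-- `a` and `b` are joined by a path of occupied edges (`a ↔ b`);
`a ↔ a` always holds. -/
def Conn {d : ℕ} (ω : BondConfig d) (a b : Vtx d) : Prop :=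
  Relation.ReflTransGen (occEdge ω) a b

/-- The connection event `{a ↔ b}`. -/
def ConnEvent {d : ℕ} (a b : Vtx d) : Set (BondConfig d) :=
  {ω | Conn ω a b}

/-- The event `{A ↔ b}` that some vertex of `A` is connected to `b`. -/
def ConnToSet {d : ℕ} (A : Set (Vtx d)) (b : Vtx d) : Set (BondConfig d) :=
  {ω | ∃ a ∈ A, Conn ω a b}

/-- Disjoint occurrence `A ∘ B` of two events. -/
def DisjOcc {d : ℕ} (A B : Set (BondConfig d)) : Set (BondConfig d) :=
  {ω | ∃ B₁ B₂ : Set (Sym2 (Vtx d)), Disjoint B₁ B₂ ∧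
    (∀ ω' : BondConfig d, (∀ e ∈ B₁, ω' e = ω e) → ω' ∈ A) ∧
    (∀ ω' : BondConfig d, (∀ e ∈ B₂, ω' e = ω e) → ω' ∈ B)}

/-- The event `{W ⇔ u} = ⋃_{w, w' ∈ W} {w ↔ u} ∘ {w' ↔ u}`. -/
def WDouble {d : ℕ} (W : Set (Vtx d)) (u : Vtx d) : Set (BondConfig d) :=
  ⋃ (w ∈ W) (w' ∈ W), DisjOcc (ConnEvent w u) (ConnEvent w' u)

/-- The event that every edge of the finite edge set `E` is occupied. -/
def occupiedEvent {d : ℕ} (E : Finset (Sym2 (Vtx d))) : Set (BondConfig d) :=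
  {ω | ∀ e ∈ E, ω e = true}

/-- `V(E)`: the set of endpoints of the edges of `E`. -/
def edgeVerts {d : ℕ} (E : Finset (Sym2 (Vtx d))) : Set (Vtx d) :=
  {v | ∃ e ∈ E, v ∈ e}

/-- The list of (unordered) edges traversed by a list of vertices. -/
def listEdges {α : Type*} (l : List α) : List (Sym2 α) :=
  (l.zip l.tail).map fun p => s(p.1, p.2)


section Aux

variable {α : Type*}

theorem listEdges_cons_cons (a b : α) (t : List α) :
    listEdges (a :: b :: t) = s(a, b) :: listEdges (b :: t) := rfl

theorem listEdges_of_chain' {R : α → α → Prop} :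
    ∀ l : List α, l.Chain' R → ∀ e ∈ listEdges l, ∃ x y, e = s(x, y) ∧ R x y := by
  intro l
  induction l with
  | nil => simp [listEdges]
  | cons a t ih =>
    cases t with
    | nil => simp [listEdges]
    | cons b t' =>
      intro h e he
      rw [listEdges_cons_cons] at he
      rcases List.mem_cons.mp he with rfl | he
      · exact ⟨a, b, rfl, h.rel_head⟩
      · exact ih h.tail e he

theorem listEdges_endpoint :
    ∀ l : List α, ∀ e ∈ listEdges l, ∃ x y, e = s(x, y) ∧ x ∈ l.dropLast := by
  intro l
  induction l with
  | nil => simp [listEdges]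
  | cons a t ih =>
    cases t with
    | nil => simp [listEdges]
    | cons b t' =>
      intro e he
      rw [listEdges_cons_cons] at he
      rcases List.mem_cons.mp he with rfl | he
      · exact ⟨a, b, rfl, by simp⟩
      · obtain ⟨x, y, hxy, hx⟩ := ih e he
        exact ⟨x, y, hxy, by rw [List.dropLast_cons₂]; exact List.mem_cons_of_mem _ hx⟩

theorem listEdges_subset_of_prefix :
    ∀ l₁ l₂ : List α, l₁ <+: l₂ → ∀ e ∈ listEdges l₁, e ∈ listEdges l₂ := by
  intro l₁
  induction l₁ with
  | nil => simp [listEdges]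
  | cons a t ih =>
    cases t with
    | nil => simp [listEdges]
    | cons b t' =>
      intro l₂ h e he
      obtain ⟨r, rfl⟩ := h
      rw [listEdges_cons_cons] at he
      rw [List.cons_append, List.cons_append, listEdges_cons_cons]
      rcases List.mem_cons.mp he with rfl | he
      · exact List.mem_cons_self
      · exact List.mem_cons_of_mem _ (ih (b :: (t' ++ r)) ⟨r, rfl⟩ e he)

theorem trunc (S : Set α) :
    ∀ l : List α, (∃ x ∈ l, x ∈ S) →
    ∃ l' : List α, l' <+: l ∧ l'.head? = l.head? ∧
      (∃ w ∈ S, l'.getLast? = some w) ∧ ∀ x ∈ l'.dropLast, x ∉ S := by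
  intro l
  induction l with
  | nil => simp
  | cons a t ih =>
    intro h
    by_cases ha : a ∈ S
    · exact ⟨[a], ⟨t, rfl⟩, rfl, ⟨a, ha, rfl⟩, by simp⟩
    · have ht : ∃ x ∈ t, x ∈ S := by
        obtain ⟨x, hx, hxS⟩ := h
        rcases List.mem_cons.mp hx with rfl | hx
        · exact absurd hxS ha
        · exact ⟨x, hx, hxS⟩
      obtain ⟨l'', hpre, hhead, hlast, hdrop⟩ := ih ht
      obtain ⟨c, r, rfl⟩ : ∃ c r, l'' = c :: r := by
        cases l'' with
        | nil =>
          exfalso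
          obtain ⟨x, hx, hxS⟩ := ht
          cases t with
          | nil => simp at hx
          | cons c r => simp at hhead
        | cons c r => exact ⟨c, r, rfl⟩
      obtain ⟨sfx, hsfx⟩ := hpre
      refine ⟨a :: c :: r, ⟨sfx, by rw [List.cons_append, hsfx]⟩, rfl, ?_, ?_⟩
      · obtain ⟨w, hw, hlw⟩ := hlast
        exact ⟨w, hw, by rw [List.getLast?_cons_cons]; exact hlw⟩
      · intro x hx
        rw [List.dropLast_cons₂] at hx
        rcases List.mem_cons.mp hx with rfl | hx
        · exact ha
        · exact hdrop x hx

end Aux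

/-- The graph of occupied edges. -/
def pGraph {d : ℕ} (ω : BondConfig d) : SimpleGraph (Vtx d) where
  Adj a b := occEdge ω a b
  symm := by
    constructor
    rintro a b ⟨h1, h2⟩
    exact ⟨h1.symm, by rwa [Sym2.eq_swap]⟩
  loopless := by constructor; rintro a ⟨h1, _⟩; exact h1 rfl

theorem conn_reachable {d : ℕ} {ω : BondConfig d} {a b : Vtx d}
    (h : Conn ω a b) : (pGraph ω).Reachable a b := by
  induction h with
  | refl => exact SimpleGraph.Reachable.refl a
  | tail _ hstep ih => exact ih.trans (SimpleGraph.Adj.reachable hstep)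

theorem side_path {d : ℕ} (ω ω' : BondConfig d) (B : Set (Sym2 (Vtx d)))
    (hB : ∀ a c : Vtx d, occEdge ω' a c → s(a, c) ∈ B ∧ occEdge ω a c)
    (E : Finset (Sym2 (Vtx d))) (b x : Vtx d) (hx : x ∈ edgeVerts E)
    (hconn : Conn ω' b x) :
    ∃ l : List (Vtx d), l.head? = some b ∧
      (∃ w ∈ edgeVerts E, l.getLast? = some w) ∧
      l.Nodup ∧ l.Chain' (occEdge ω) ∧
      (∀ e ∈ listEdges l, e ∈ B) ∧ (∀ e ∈ listEdges l, e ∉ E) := by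
  classical
  obtain ⟨w⟩ := conn_reachable hconn
  let p := w.toPath
  have hnodup : (p : (pGraph ω').Walk b x).support.Nodup := p.2.support_nodup
  have hchain : List.Chain' (occEdge ω') (p : (pGraph ω').Walk b x).support :=
    by unfold List.Chain'; exact SimpleGraph.Walk.isChain_adj_support (p : (pGraph ω').Walk b x)
  have hmem : x ∈ (p : (pGraph ω').Walk b x).support :=
    SimpleGraph.Walk.end_mem_support _
  obtain ⟨l', hpre, hhead, ⟨wv, hwv, hlw⟩, hdrop⟩ :=
    trunc (edgeVerts E) (p : (pGraph ω').Walk b x).support ⟨x, hmem, hx⟩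
  refine ⟨l', ?_, ⟨wv, hwv, hlw⟩, hpre.sublist.nodup hnodup,
    (hchain.prefix hpre).imp (fun a c h => (hB a c h).2), ?_, ?_⟩
  · rw [hhead, SimpleGraph.Walk.support_eq_cons]; rfl
  · intro e he
    obtain ⟨a, c, rfl, hac⟩ := listEdges_of_chain' l' (hchain.prefix hpre) e he
    exact (hB a c hac).1
  · intro e he heE
    obtain ⟨a, c, rfl, ha⟩ := listEdges_endpoint l' e he
    exact hdrop a ha ⟨s(a, c), heE, Sym2.mem_mk_left a c⟩

/-- **Two extra disjoint paths from a disjoint double connection** (Lemma 4.23).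
If the edges of `E` are occupied, `u, v ∈ V(E)`, and `{v ↔ b} ∘ {b ↔ u}` occurs,
then there are two occupied paths starting at `b` and ending in `V(E)`, which are
edge-disjoint from each other and avoid the edges of `E`. -/
theorem two_extra_disjoint_paths
    {d : ℕ} (ω : BondConfig d)
    (E : Finset (Sym2 (Vtx d))) (hE : E.Nonempty)
    (hEnd : ∀ e ∈ E, ¬ e.IsDiag)
    (hocc : ∀ e ∈ E, ω e = true)
    (u v : Vtx d) (hu : u ∈ edgeVerts E) (hv : v ∈ edgeVerts E)
    (b : Vtx d)
    (hω : ω ∈ DisjOcc (ConnEvent v b) (ConnEvent b u)) :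
    ∃ l₁ l₂ : List (Vtx d),
      l₁.head? = some b ∧ l₂.head? = some b ∧
      (∃ w₁ ∈ edgeVerts E, l₁.getLast? = some w₁) ∧
      (∃ w₂ ∈ edgeVerts E, l₂.getLast? = some w₂) ∧
      l₁.Nodup ∧ l₂.Nodup ∧
      l₁.Chain' (occEdge ω) ∧ l₂.Chain' (occEdge ω) ∧
      (listEdges l₁).Disjoint (listEdges l₂) ∧
      (∀ e ∈ listEdges l₁, e ∉ E) ∧ (∀ e ∈ listEdges l₂, e ∉ E) := by
  classical
  obtain ⟨B₁, B₂, hdisj, h1, h2⟩ := hω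
  set ω₁ : BondConfig d := fun e => if e ∈ B₁ then ω e else false with hω₁
  set ω₂ : BondConfig d := fun e => if e ∈ B₂ then ω e else false with hω₂
  have hc1 : Conn ω₁ v b := h1 ω₁ (fun e he => by simp [hω₁, he])
  have hc2 : Conn ω₂ b u := h2 ω₂ (fun e he => by simp [hω₂, he])
  have hsymm : Symmetric (occEdge ω₁) := by
    rintro a c ⟨ha, hb⟩
    exact ⟨ha.symm, by rwa [Sym2.eq_swap]⟩
  have hc1' : Conn ω₁ b v := by
    haveI : Std.Symm (occEdge ω₁) := ⟨fun a c h => hsymm h⟩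
    exact Relation.ReflTransGen.symmetric.symm _ _ hc1
  have hB₁ : ∀ a c : Vtx d, occEdge ω₁ a c → s(a, c) ∈ B₁ ∧ occEdge ω a c := by
    rintro a c ⟨ha, hb⟩
    simp only [hω₁] at hb
    split at hb
    · exact ⟨by assumption, ha, hb⟩
    · simp at hb
  have hB₂ : ∀ a c : Vtx d, occEdge ω₂ a c → s(a, c) ∈ B₂ ∧ occEdge ω a c := by
    rintro a c ⟨ha, hb⟩
    simp only [hω₂] at hb
    split at hb
    · exact ⟨by assumption, ha, hb⟩
    · simp at hb
  obtain ⟨l₁, hh₁, hl₁, hn₁, hch₁, hin₁, hnE₁⟩ :=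
    side_path ω ω₁ B₁ hB₁ E b v hv hc1'
  obtain ⟨l₂, hh₂, hl₂, hn₂, hch₂, hin₂, hnE₂⟩ :=
    side_path ω ω₂ B₂ hB₂ E b u hu hc2
  refine ⟨l₁, l₂, hh₁, hh₂, hl₁, hl₂, hn₁, hn₂, hch₁, hch₂, ?_, hnE₁, hnE₂⟩
  intro e he₁ he₂
  exact Set.disjoint_left.mp hdisj (hin₁ e he₁) (hin₂ e he₂)
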